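/- Let k ≥ 2 and 1 ≤ m ≤ k−1, and let (k_1,…,k_m) be positive integers with k_1+⋯+k_m = k. Let c > 1/2 and δ > 0 be fixed. Let D = (d_{ij}) be any m×k matrix with entries in {0,1,−1} such that every column has exactly one nonzero entry and row i has exactly k_i nonzero entries for each 1 ≤ i ≤ m. Then for all n ≥ 1: V_n^{−2kc} ∫_{ℝ^n}⋯∫_{ℝ^n} ∏_{j=1}^k f_{c,δ}( Σ_{i=1}^m d_{ij}·x_i ) dx_1⋯dx_m = δ^{m−2kc} · ∏_{i=1}^m 1/(2 k_i c − 1). -/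

import Mathlib

open MeasureTheory Set

/-- `V_n = π^{n/2} / Γ(n/2 + 1)`, the volume of the unit ball in `ℝⁿ`. -/
noncomputable def unitBallVol (n : ℕ) : ℝ :=
  Real.pi ^ ((n : ℝ) / 2) / Real.Gamma ((n : ℝ) / 2 + 1)

/-- `R_n(δ) = (δ / V_n)^{1/n}`, the radius of a ball of volume `δ` in `ℝⁿ`. -/
noncomputable def cutRadius (n : ℕ) (δ : ℝ) : ℝ :=
  (δ / unitBallVol n) ^ (1 / (n : ℝ))

/-- `f_{c,δ}(x) = |x|^{-2cn}` if `|x| > R_n(δ)`, and `0` otherwise. -/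
noncomputable def truncPower (n : ℕ) (c δ : ℝ) (x : EuclideanSpace ℝ (Fin n)) : ℝ :=
  if cutRadius n δ < ‖x‖ then ‖x‖ ^ (-(2 * c * (n : ℝ))) else 0

lemma unitBallVol_pos (n : ℕ) : 0 < unitBallVol n := by
  apply div_pos (Real.rpow_pos_of_pos Real.pi_pos _)
  exact Real.Gamma_pos_of_pos (by positivity)

lemma cutRadius_pos {n : ℕ} {δ : ℝ} (hδ : 0 < δ) : 0 < cutRadius n δ :=
  Real.rpow_pos_of_pos (div_pos hδ (unitBallVol_pos n)) _
lemma single_integral (n : ℕ) (hn : 1 ≤ n) (c δ : ℝ) (hc : 1/2 < c) (hδ : 0 < δ)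
    (K : ℕ) (hK : 1 ≤ K) :
    (∫ x : EuclideanSpace ℝ (Fin n),
        (if cutRadius n δ < ‖x‖ then ‖x‖ ^ (-(2*c*(K:ℝ)*(n:ℝ))) else 0))
    = unitBallVol n ^ (2*c*(K:ℝ)) * δ ^ (1 - 2*c*(K:ℝ)) * (2*(K:ℝ)*c - 1)⁻¹ := by
  have hV := unitBallVol_pos n
  have hR := cutRadius_pos (n := n) hδ
  haveI : Nonempty (Fin n) := ⟨⟨0, hn⟩⟩
  haveI : Nontrivial (EuclideanSpace ℝ (Fin n)) :=
    Module.nontrivial_of_finrank_pos (R := ℝ) (by rw [finrank_euclideanSpace_fin]; omega)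
  set R := cutRadius n δ with hRdef
  set p : ℝ := -(2*c*(K:ℝ)*(n:ℝ)) with hp
  have hA : 1 < 2*c*(K:ℝ) := by
    have : (1:ℝ) ≤ K := by exact_mod_cast hK
    nlinarith
  have key := integral_fun_norm_addHaar (volume : Measure (EuclideanSpace ℝ (Fin n)))
    (fun y : ℝ => if R < y then y ^ p else 0)
  rw [finrank_euclideanSpace_fin] at key
  rw [key]
  -- volume of unit ball
  have hvol : (volume (Metric.ball (0 : EuclideanSpace ℝ (Fin n)) 1)).toReal = unitBallVol n := by
    rw [EuclideanSpace.volume_ball]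
    have h1 : Real.sqrt Real.pi ^ Fintype.card (Fin n) /
        Real.Gamma (Fintype.card (Fin n) / 2 + 1) = unitBallVol n := by
      rw [Fintype.card_fin]
      unfold unitBallVol
      congr 1
      rw [Real.sqrt_eq_rpow, ← Real.rpow_natCast (Real.pi ^ ((1:ℝ)/2)) n,
        ← Real.rpow_mul Real.pi_pos.le]
      ring_nf
    rw [h1]
    simp [ENNReal.toReal_ofReal (unitBallVol_pos n).le]
  rw [show volume.real (Metric.ball (0 : EuclideanSpace ℝ (Fin n)) 1) = unitBallVol n from hvol]
  -- inner integral
  have hinner : (∫ y in Ioi (0:ℝ), y ^ (n-1) • (if R < y then y ^ p else 0))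
      = R ^ ((n:ℝ) + p) / (2*c*(K:ℝ)*(n:ℝ) - n) := by
    have h1 : ∀ y : ℝ, y ^ (n-1) • (if R < y then y ^ p else 0)
        = Set.indicator (Ioi R) (fun y => y ^ (n-1) * y ^ p) y := by
      intro y
      by_cases h : R < y <;> simp [Set.indicator_apply, mem_Ioi, h, smul_eq_mul]
    simp_rw [h1]
    rw [integral_indicator measurableSet_Ioi, Measure.restrict_restrict measurableSet_Ioi,
      Set.Ioi_inter_Ioi, max_eq_left hR.le]
    have h2 : ∀ y ∈ Ioi R, y ^ (n-1) * y ^ p = y ^ (((n:ℝ) - 1) + p) := by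
      intro y hy
      have hy0 : (0:ℝ) < y := lt_trans hR hy
      rw [← Real.rpow_natCast y (n-1), ← Real.rpow_add hy0]
      congr 2
      push_cast [Nat.cast_sub hn]
      ring
    rw [setIntegral_congr_fun measurableSet_Ioi h2]
    have hq : ((n:ℝ) - 1) + p < -1 := by
      have hn1 : (1:ℝ) ≤ (n:ℝ) := by exact_mod_cast hn
      rw [hp]; nlinarith
    rw [integral_Ioi_rpow_of_lt hq hR]
    have : ((n:ℝ) - 1) + p + 1 = (n:ℝ) + p := by ring
    rw [this, hp]
    rw [neg_div, ← div_neg]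
    ring_nf
  rw [hinner]
  -- final algebra
  have hRpow : R ^ ((n:ℝ) + p) = δ ^ (1 - 2*c*(K:ℝ)) * unitBallVol n ^ (2*c*(K:ℝ) - 1) := by
    rw [hRdef]
    unfold cutRadius
    rw [← Real.rpow_mul (div_nonneg hδ.le hV.le)]
    have hn0 : (n:ℝ) ≠ 0 := by positivity
    have : 1/(n:ℝ) * ((n:ℝ) + p) = 1 - 2*c*(K:ℝ) := by
      rw [hp]; field_simp; ring
    rw [this, Real.div_rpow hδ.le hV.le, div_eq_mul_inv, ← Real.rpow_neg hV.le]
    congr 2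
    ring
  rw [hRpow, nsmul_eq_mul, smul_eq_mul]
  have hVpow : unitBallVol n * unitBallVol n ^ (2*c*(K:ℝ) - 1) = unitBallVol n ^ (2*c*(K:ℝ)) := by
    nth_rewrite 1 [← Real.rpow_one (unitBallVol n)]
    rw [← Real.rpow_add hV]
    ring_nf
  have hden : 2*c*(K:ℝ)*(n:ℝ) - n = (n:ℝ) * (2*(K:ℝ)*c - 1) := by ring
  rw [hden]
  have hn0 : (n:ℝ) ≠ 0 := by positivity
  have hd0 : 2*(K:ℝ)*c - 1 ≠ 0 := by nlinarith
  field_simp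
  rw [← hVpow]

lemma truncPower_smul_pm (n : ℕ) (c δ : ℝ) (ε : ℤ) (hε : ε = 1 ∨ ε = -1)
    (y : EuclideanSpace ℝ (Fin n)) :
    truncPower n c δ ((ε:ℝ) • y) = truncPower n c δ y := by
  have : ‖(ε:ℝ) • y‖ = ‖y‖ := by
    rw [norm_smul]
    rcases hε with h | h <;> simp [h]
  simp [truncPower, this]

theorem product_form_admissible_integral
    (k m : ℕ) (hk : 2 ≤ k) (hm1 : 1 ≤ m) (hmk : m ≤ k - 1)
    (ki : Fin m → ℕ) (hpos : ∀ i, 0 < ki i) (hsum : ∑ i : Fin m, ki i = k)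
    (c δ : ℝ) (hc : 1 / 2 < c) (hδ : 0 < δ)
    (D : Matrix (Fin m) (Fin k) ℤ)
    (hent : ∀ i j, D i j = 0 ∨ D i j = 1 ∨ D i j = -1)
    (hcol : ∀ j, ∃! i, D i j ≠ 0)
    (hrow : ∀ i : Fin m, (Finset.univ.filter fun j => D i j ≠ 0).card = ki i)
    (n : ℕ) (hn : 1 ≤ n) :
    unitBallVol n ^ (-(2 * (k : ℝ) * c)) *
      ∫ x : Fin m → EuclideanSpace ℝ (Fin n),
        ∏ j : Fin k, truncPower n c δ (∑ i : Fin m, (D i j : ℝ) • x i)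
    = δ ^ ((m : ℝ) - 2 * (k : ℝ) * c) * ∏ i : Fin m, 1 / (2 * (ki i : ℝ) * c - 1) := by
  have hV := unitBallVol_pos n
  -- the selector function
  set σ : Fin k → Fin m := fun j => (hcol j).choose with hσdef
  have hσ : ∀ j, D (σ j) j ≠ 0 := fun j => (hcol j).choose_spec.1
  have huniq : ∀ j i, D i j ≠ 0 → i = σ j := fun j i h => (hcol j).choose_spec.2 i h
  set g : Fin m → EuclideanSpace ℝ (Fin n) → ℝ := fun i y =>
    (if cutRadius n δ < ‖y‖ then ‖y‖ ^ (-(2*c*((ki i : ℕ):ℝ)*(n:ℝ))) else 0) with hgdef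
  have hpt : ∀ x : Fin m → EuclideanSpace ℝ (Fin n),
      (∏ j : Fin k, truncPower n c δ (∑ i : Fin m, (D i j : ℝ) • x i))
      = ∏ i : Fin m, g i (x i) := by
    intro x
    have h1 : ∀ j : Fin k, truncPower n c δ (∑ i : Fin m, (D i j : ℝ) • x i)
        = truncPower n c δ (x (σ j)) := by
      intro j
      have hs : (∑ i : Fin m, (D i j : ℝ) • x i) = ((D (σ j) j : ℝ)) • x (σ j) := by
        refine Finset.sum_eq_single _ (fun i _ hne => ?_) (by simp)
        have : D i j = 0 := by
          by_contra h
          exact hne (huniq j i h)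
        simp [this]
      rw [hs]
      have := hent (σ j) j
      rcases this with h | h | h
      · exact absurd h (hσ j)
      · rw [truncPower_smul_pm n c δ _ (Or.inl h)]
      · rw [truncPower_smul_pm n c δ _ (Or.inr h)]
    rw [Finset.prod_congr rfl (fun j _ => h1 j)]
    rw [← Finset.prod_fiberwise_of_maps_to (fun j (_ : j ∈ Finset.univ) => Finset.mem_univ (σ j))
      (fun j => truncPower n c δ (x (σ j)))]
    refine Finset.prod_congr rfl (fun i _ => ?_)
    have hfib : (Finset.univ.filter fun j => σ j = i) = Finset.univ.filter fun j => D i j ≠ 0 := by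
      ext j
      simp only [Finset.mem_filter, Finset.mem_univ, true_and]
      constructor
      · intro h; rw [← h]; exact hσ j
      · intro h; exact (huniq j i h).symm
    have hconst : ∀ j ∈ Finset.univ.filter fun j => σ j = i,
        truncPower n c δ (x (σ j)) = truncPower n c δ (x i) := by
      intro j hj
      rw [(Finset.mem_filter.mp hj).2]
    rw [Finset.prod_congr rfl hconst, Finset.prod_const, hfib, hrow i]
    -- truncPower (x i) ^ ki i = g i (x i)
    rw [hgdef, truncPower]
    by_cases h : cutRadius n δ < ‖x i‖
    · simp only [h, if_true]
      rw [← Real.rpow_natCast (‖x i‖ ^ (-(2*c*(n:ℝ)))) (ki i),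
        ← Real.rpow_mul (norm_nonneg _)]
      congr 1
      ring
    · simp only [h, if_false]
      exact zero_pow (hpos i).ne'
  simp_rw [hpt]
  rw [MeasureTheory.integral_fintype_prod_volume_eq_prod (ι := Fin m) g]
  have hone : ∀ i : Fin m, (∫ y : EuclideanSpace ℝ (Fin n), g i y)
      = unitBallVol n ^ (2*c*((ki i:ℕ):ℝ)) * δ ^ (1 - 2*c*((ki i:ℕ):ℝ))
        * (2*((ki i:ℕ):ℝ)*c - 1)⁻¹ :=
    fun i => single_integral n hn c δ hc hδ (ki i) (hpos i)
  rw [Finset.prod_congr rfl (fun i _ => hone i)]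
  rw [Finset.prod_mul_distrib, Finset.prod_mul_distrib]
  rw [← Real.rpow_sum_of_pos hV, ← Real.rpow_sum_of_pos hδ]
  have hsk : ∑ i : Fin m, (ki i : ℝ) = (k : ℝ) := by
    rw [← Nat.cast_sum, hsum]
  have e1 : ∑ i : Fin m, 2*c*((ki i:ℕ):ℝ) = 2*(k:ℝ)*c := by
    rw [← Finset.mul_sum, hsk]; ring
  have e2 : ∑ i : Fin m, (1 - 2*c*((ki i:ℕ):ℝ)) = (m:ℝ) - 2*(k:ℝ)*c := by
    rw [Finset.sum_sub_distrib, Finset.sum_const, ← Finset.mul_sum, hsk]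
    simp; ring
  rw [e1, e2]
  rw [show ∀ a b d e : ℝ, a * (b * d * e) = (a * b) * d * e by intros; ring]
  rw [← Real.rpow_add hV]
  rw [show -(2*(k:ℝ)*c) + 2*(k:ℝ)*c = 0 by ring, Real.rpow_zero, one_mul]
  congr 1
  refine Finset.prod_congr rfl (fun i _ => ?_)
  rw [one_div]
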